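/- For every unit vector ψ on n qubits and integers m, m' with 2 ≤ m' ≤ m ≤ n: if R_m(ψ) = 0 then R_{m'}(ψ) = 0 (an m-separable pure state can be regarded as an m'-separable state for any m' ≤ m). -/

import Mathlib

open Finset

/-- Bit strings of length `n` (computational basis labels for `n` qubits). -/
abbrev Bits (n : ℕ) := Fin n → Bool

/-- `bflip δ j` is the bit string `j` with the bits in positions `δ` flipped. -/
def bflip {n : ℕ} (δ : Finset (Fin n)) (j : Bits n) : Bits n :=
  fun i => if i ∈ δ then !(j i) else j i

/-- The generalized (squared) concurrence `C²_{γ,δ}(ψ)` of a pure state `ψ`,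
for disjoint subsets `γ, δ ⊆ {1,…,n}`. -/
noncomputable def Csq {n : ℕ} (γ δ : Finset (Fin n)) (ψ : Bits n → ℂ) : ℝ :=
  ∑ j : Bits n,
    ‖(starRingEnd ℂ) (ψ (bflip (γ ∪ δ) j)) * (starRingEnd ℂ) (ψ j) -
      (starRingEnd ℂ) (ψ (bflip γ j)) * (starRingEnd ℂ) (ψ (bflip δ j))‖ ^ 2

/-- `η_γ(ψ) := ∑_{δ ⊆ γ̄} C²_{γ,δ}(ψ)`. -/
noncomputable def eta {n : ℕ} (γ : Finset (Fin n)) (ψ : Bits n → ℂ) : ℝ :=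
  ∑ δ ∈ γᶜ.powerset, Csq γ δ ψ

/-- `P` is a partition of `{1,…,n}` into `m` nonempty pairwise disjoint parts. -/
def IsMPartition (n m : ℕ) (P : Finset (Finset (Fin n))) : Prop :=
  P.card = m ∧ (∀ γ ∈ P, γ.Nonempty) ∧
    (∀ γ ∈ P, ∀ γ' ∈ P, γ ≠ γ' → Disjoint γ γ') ∧ P.sup id = Finset.univ

instance (n m : ℕ) : DecidablePred (IsMPartition n m) := fun P => by
  unfold IsMPartition; infer_instance

/-- `ξ_Γ(ψ) := (1/m)·∑_{γ ∈ Γ} η_γ(ψ)` for a partition `Γ` into `m` parts. -/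
noncomputable def xiP {n : ℕ} (P : Finset (Finset (Fin n))) (ψ : Bits n → ℂ) : ℝ :=
  (1 / (P.card : ℝ)) * ∑ γ ∈ P, eta γ ψ

/-- The collection of all partitions of `{1,…,n}` into `m` parts. -/
def partitionsM (n m : ℕ) : Finset (Finset (Finset (Fin n))) :=
  Finset.univ.filter (IsMPartition n m)

/-- The Stirling number of the second kind `S(n,m)`: the number of partitions
of `{1,…,n}` into `m` nonempty parts. -/
def stirling2 (n m : ℕ) : ℕ := (partitionsM n m).card

/-- `R_m(ψ) := (∏_{|Γ| = m} ξ_Γ(ψ))^{1/S(n,m)}`, the product running over all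
partitions of `{1,…,n}` into `m` parts (real power). -/
noncomputable def Rm (n m : ℕ) (ψ : Bits n → ℂ) : ℝ :=
  (∏ P ∈ partitionsM n m, xiP P ψ) ^ (1 / (stirling2 n m : ℝ))

namespace RmAux

variable {n : ℕ}

lemma bflip_bflip (A B : Finset (Fin n)) (j : Bits n) :
    bflip A (bflip B j) = bflip (symmDiff A B) j := by
  funext i
  simp only [bflip, Finset.mem_symmDiff]
  by_cases hA : i ∈ A <;> by_cases hB : i ∈ B <;> simp [hA, hB]

lemma Csq_nonneg (γ δ : Finset (Fin n)) (ψ : Bits n → ℂ) : 0 ≤ Csq γ δ ψ :=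
  Finset.sum_nonneg fun _ _ => by positivity

lemma eta_nonneg (γ : Finset (Fin n)) (ψ : Bits n → ℂ) : 0 ≤ eta γ ψ :=
  Finset.sum_nonneg fun δ _ => Csq_nonneg γ δ ψ

lemma xiP_nonneg (P : Finset (Finset (Fin n))) (ψ : Bits n → ℂ) : 0 ≤ xiP P ψ :=
  mul_nonneg (by positivity) (Finset.sum_nonneg fun γ _ => eta_nonneg γ ψ)

/-- The factorization property equivalent to `η_γ(ψ) = 0`. -/
def Fprop (γ : Finset (Fin n)) (F : Bits n → ℂ) : Prop :=
  ∀ δ ⊆ γᶜ, ∀ j : Bits n,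
    F (bflip (γ ∪ δ) j) * F j = F (bflip γ j) * F (bflip δ j)

lemma eta_eq_zero_iff (γ : Finset (Fin n)) (ψ : Bits n → ℂ) :
    eta γ ψ = 0 ↔ Fprop γ (fun j => (starRingEnd ℂ) (ψ j)) := by
  rw [eta, Finset.sum_eq_zero_iff_of_nonneg (fun δ _ => Csq_nonneg γ δ ψ)]
  constructor
  · intro h δ hδ j
    have h1 := h δ (Finset.mem_powerset.mpr hδ)
    rw [Csq, Finset.sum_eq_zero_iff_of_nonneg (fun j _ => by positivity)] at h1
    have h2 := h1 j (Finset.mem_univ j)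
    have h4 := norm_eq_zero.mp ((pow_eq_zero_iff two_ne_zero).mp h2)
    have h5 := sub_eq_zero.mp h4
    simpa using h5
  · intro h δ hδ
    rw [Csq]
    apply Finset.sum_eq_zero
    intro j _
    have := h δ (Finset.mem_powerset.mp hδ) j
    simp only at this
    rw [this, sub_self, norm_zero]
    norm_num

/-- Key lemma: the factorization property is preserved under unions of
disjoint parts. -/
lemma Fprop_union {γ₁ γ₂ : Finset (Fin n)} {F : Bits n → ℂ}
    (hd : Disjoint γ₁ γ₂) (h1 : Fprop γ₁ F) (h2 : Fprop γ₂ F) :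
    Fprop (γ₁ ∪ γ₂) F := by
  intro δ hδ j
  have hδ1 : δ ⊆ γ₁ᶜ := fun i hi =>
    Finset.mem_compl.mpr fun hi1 =>
      (Finset.mem_compl.mp (hδ hi)) (Finset.mem_union_left _ hi1)
  have hδ2 : δ ⊆ γ₂ᶜ := fun i hi =>
    Finset.mem_compl.mpr fun hi2 =>
      (Finset.mem_compl.mp (hδ hi)) (Finset.mem_union_right _ hi2)
  have hγ2c : γ₂ ⊆ γ₁ᶜ := fun i hi =>
    Finset.mem_compl.mpr fun hi1 => (Finset.disjoint_left.mp hd) hi1 hi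
  have h25 : γ₂ ∪ δ ⊆ γ₁ᶜ := Finset.union_subset hγ2c (fun i hi =>
    Finset.mem_compl.mpr fun hi1 =>
      (Finset.mem_compl.mp (hδ hi)) (Finset.mem_union_left _ hi1))
  have e1 := h1 (γ₂ ∪ δ) h25 j
  have e2 := h2 δ hδ2 j
  have e8 := h1 γ₂ hγ2c j
  have e5 := h1 (γ₂ ∪ δ) h25 (bflip δ j)
  have d1 : ∀ i, i ∈ δ → i ∉ γ₁ := fun i hi => Finset.mem_compl.mp (hδ1 hi)
  have d2 : ∀ i, i ∈ δ → i ∉ γ₂ := fun i hi => Finset.mem_compl.mp (hδ2 hi)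
  have id1 : symmDiff (γ₁ ∪ (γ₂ ∪ δ)) δ = γ₁ ∪ γ₂ := by
    ext i
    have := d1 i; have := d2 i
    simp only [Finset.mem_symmDiff, Finset.mem_union]
    tauto
  have id2 : symmDiff (γ₂ ∪ δ) δ = γ₂ := by
    ext i
    have := d2 i
    simp only [Finset.mem_symmDiff, Finset.mem_union]
    tauto
  rw [bflip_bflip, bflip_bflip, bflip_bflip, id1, id2] at e5
  rw [← Finset.union_assoc] at e1
  -- notation
  set a := F (bflip (γ₁ ∪ γ₂ ∪ δ) j) with ha
  set b := F (bflip (γ₁ ∪ γ₂) j) with hb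
  set c := F (bflip δ j) with hc
  set x0 := F j with hx0
  set x1 := F (bflip γ₁ j) with hx1
  set x2 := F (bflip γ₂ j) with hx2
  set x23 := F (bflip (γ₂ ∪ δ) j) with hx23
  set x13 := F (bflip (symmDiff γ₁ δ) j) with hx13
  -- e1 : a * x0 = x1 * x23
  -- e2 : x23 * x0 = x2 * c
  -- e8 : b * x0 = x1 * x2
  -- e5 : b * c = x13 * x2
  -- goal : a * x0 = b * c
  by_cases h0 : x0 = 0
  · rw [h0, mul_zero]
    by_cases hc0 : c = 0
    · rw [hc0, mul_zero]
    · have : x2 * c = 0 := by rw [← e2, h0, mul_zero]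
      have hx2z : x2 = 0 := by
        rcases mul_eq_zero.mp this with h | h
        · exact h
        · exact absurd h hc0
      rw [e5, hx2z, mul_zero]
  · apply mul_right_cancel₀ h0
    linear_combination x0 * e1 + x1 * e2 - c * e8

lemma eta_union_eq_zero {γ₁ γ₂ : Finset (Fin n)} {ψ : Bits n → ℂ}
    (hd : Disjoint γ₁ γ₂) (h1 : eta γ₁ ψ = 0) (h2 : eta γ₂ ψ = 0) :
    eta (γ₁ ∪ γ₂) ψ = 0 :=
  (eta_eq_zero_iff _ _).mpr
    (Fprop_union hd ((eta_eq_zero_iff _ _).mp h1) ((eta_eq_zero_iff _ _).mp h2))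

/-- Merging two parts of a `(k+1)`-partition with vanishing `η`'s yields a
`k`-partition with vanishing `η`'s. -/
lemma step (ψ : Bits n → ℂ) {k : ℕ} {P : Finset (Finset (Fin n))}
    (hP : IsMPartition n (k + 1) P) (hz : ∀ γ ∈ P, eta γ ψ = 0) (hk : 1 ≤ k) :
    ∃ Q, IsMPartition n k Q ∧ ∀ γ ∈ Q, eta γ ψ = 0 := by
  obtain ⟨hcard, hne, hdisj, hsup⟩ := hP
  have h2 : 1 < P.card := by omega
  obtain ⟨γ₁, hγ₁, γ₂, hγ₂, hne12⟩ := Finset.one_lt_card.mp h2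
  set E := (P.erase γ₁).erase γ₂ with hE
  have hγ₂E : γ₂ ∈ P.erase γ₁ := Finset.mem_erase.mpr ⟨fun h => hne12 h.symm, hγ₂⟩
  have hmemE : ∀ γ ∈ E, γ ∈ P ∧ γ ≠ γ₁ ∧ γ ≠ γ₂ := by
    intro γ hγ
    rw [hE, Finset.mem_erase, Finset.mem_erase] at hγ
    exact ⟨hγ.2.2, hγ.2.1, hγ.1⟩
  have hnotinE : γ₁ ∪ γ₂ ∉ E := by
    intro hmem
    obtain ⟨hmem', hne1, _⟩ := hmemE _ hmem
    have hd := hdisj _ hmem' _ hγ₁ hne1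
    have : Disjoint γ₁ γ₁ := hd.mono_left Finset.subset_union_left
    rw [Finset.disjoint_self_iff_empty] at this
    exact (hne γ₁ hγ₁).ne_empty this
  refine ⟨insert (γ₁ ∪ γ₂) E, ⟨?_, ?_, ?_, ?_⟩, ?_⟩
  · rw [Finset.card_insert_of_notMem hnotinE, hE,
      Finset.card_erase_of_mem hγ₂E, Finset.card_erase_of_mem hγ₁, hcard]
    omega
  · intro γ hγ
    rcases Finset.mem_insert.mp hγ with h | h
    · subst h
      exact (hne γ₁ hγ₁).mono Finset.subset_union_left
    · exact hne γ ((hmemE _ h).1)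
  · intro γ hγ γ' hγ' hneq
    rcases Finset.mem_insert.mp hγ with h | h <;>
      rcases Finset.mem_insert.mp hγ' with h' | h'
    · exact absurd (h.trans h'.symm) hneq
    · subst h
      obtain ⟨hP', hne1, hne2⟩ := hmemE _ h'
      exact Finset.disjoint_union_left.mpr
        ⟨hdisj _ hγ₁ _ hP' (fun hh => hne1 hh.symm),
         hdisj _ hγ₂ _ hP' (fun hh => hne2 hh.symm)⟩
    · subst h'
      obtain ⟨hP', hne1, hne2⟩ := hmemE _ h
      exact (Finset.disjoint_union_left.mpr
        ⟨hdisj _ hγ₁ _ hP' (fun hh => hne1 hh.symm),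
         hdisj _ hγ₂ _ hP' (fun hh => hne2 hh.symm)⟩).symm
    · exact hdisj _ ((hmemE _ h).1) _ ((hmemE _ h').1) hneq
  · have hPdecomp : P = insert γ₁ (insert γ₂ E) := by
      rw [hE, Finset.insert_erase hγ₂E, Finset.insert_erase hγ₁]
    have := hsup
    rw [hPdecomp, Finset.sup_insert, Finset.sup_insert] at this
    rw [Finset.sup_insert, ← this]
    simp only [id]
    rw [← Finset.sup_eq_union, sup_assoc]
  · intro γ hγ
    rcases Finset.mem_insert.mp hγ with h | h
    · subst h
      exact eta_union_eq_zero (hdisj _ hγ₁ _ hγ₂ hne12) (hz _ hγ₁) (hz _ hγ₂)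
    · exact hz _ ((hmemE _ h).1)

lemma descend (ψ : Bits n → ℂ) :
    ∀ d k, (∃ P, IsMPartition n (k + d) P ∧ ∀ γ ∈ P, eta γ ψ = 0) → 1 ≤ k →
      ∃ Q, IsMPartition n k Q ∧ ∀ γ ∈ Q, eta γ ψ = 0 := by
  intro d
  induction d with
  | zero => intro k h _; simpa using h
  | succ d ih =>
    intro k h hk
    obtain ⟨P, hP, hz⟩ := h
    have hP' : IsMPartition n ((k + d) + 1) P := by
      rwa [show k + (d + 1) = (k + d) + 1 by omega] at hP
    obtain ⟨Q, hQ, hQz⟩ := step ψ hP' hz (by omega)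
    exact ih k ⟨Q, hQ, hQz⟩ hk

end RmAux

/-- For a unit vector `ψ` on `n` qubits and `2 ≤ m' ≤ m ≤ n`: if `R_m(ψ) = 0`
then `R_{m'}(ψ) = 0`. -/
theorem Rm_zero_mono (n m m' : ℕ) (hn : 2 ≤ n) (hm' : 2 ≤ m') (hm : m' ≤ m) (hmn : m ≤ n)
    (ψ : Bits n → ℂ) (hψ : ∑ j, ‖ψ j‖ ^ 2 = 1)
    (h : Rm n m ψ = 0) : Rm n m' ψ = 0 := by
  have hprodnn : 0 ≤ ∏ P ∈ partitionsM n m, xiP P ψ :=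
    Finset.prod_nonneg fun P _ => RmAux.xiP_nonneg P ψ
  rw [Rm] at h
  obtain ⟨hprod, -⟩ := (Real.rpow_eq_zero_iff_of_nonneg hprodnn).mp h
  obtain ⟨P, hPmem, hPzero⟩ := Finset.prod_eq_zero_iff.mp hprod
  have hPpart : IsMPartition n m P := (Finset.mem_filter.mp hPmem).2
  have hcard : P.card = m := hPpart.1
  have hsum : ∑ γ ∈ P, eta γ ψ = 0 := by
    rw [xiP] at hPzero
    rcases mul_eq_zero.mp hPzero with h' | h'
    · exfalso
      rw [hcard] at h'
      rcases div_eq_zero_iff.mp h' with h'' | h''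
      · exact one_ne_zero h''
      · exact (Nat.cast_ne_zero.mpr (by omega : m ≠ 0)) h''
    · exact h'
  have hz : ∀ γ ∈ P, eta γ ψ = 0 :=
    (Finset.sum_eq_zero_iff_of_nonneg fun γ _ => RmAux.eta_nonneg γ ψ).mp hsum
  obtain ⟨Q, hQ, hQz⟩ := RmAux.descend ψ (m - m') m'
    ⟨P, by rwa [show m' + (m - m') = m by omega], hz⟩ (by omega)
  have hQmem : Q ∈ partitionsM n m' :=
    Finset.mem_filter.mpr ⟨Finset.mem_univ _, hQ⟩
  have hxiQ : xiP Q ψ = 0 := by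
    rw [xiP, Finset.sum_eq_zero hQz, mul_zero]
  have hprod' : ∏ R ∈ partitionsM n m', xiP R ψ = 0 :=
    Finset.prod_eq_zero hQmem hxiQ
  rw [Rm, hprod', Real.zero_rpow]
  exact one_div_ne_zero
    (Nat.cast_ne_zero.mpr (by rw [stirling2]; exact Finset.card_ne_zero_of_mem hQmem))
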